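/- Let M₀ ∈ ℝ, c > 0, L_g ≥ 0, M_g > 0 and S < M₀. Then there exists C_S > 0, depending only on M₀, S, c and L_g, with the following property. Let U and V be measurable spaces, u : [0,∞) → U and v : [0,∞) → V Lebesgue-measurable controls, and g : ℝ × U × V → ℝ a function with 0 ≤ g(y,a,b) ≤ M_g and |g(y,a,b) − g(y',a,b)| ≤ L_g|y − y'| for all y, y' ∈ ℝ, a ∈ U, b ∈ V, and with g(y,a,b) ≥ c whenever y ≤ M₀. Let S ≤ y₀ ≤ y₀' < M₀ and let y, y' : [0,∞) → ℝ be continuous functions such that for all t ≥ 0 the integrands below are Lebesgue measurable and y(t) = y₀ + ∫₀ᵗ g(y(s),u(s),v(s)) ds and y'(t) = y₀' + ∫₀ᵗ g(y'(s),u(s),v(s)) ds. Then the hitting times 𝒯 = inf{t ≥ 0 : y(t) ≥ M₀} and 𝒯' = inf{t ≥ 0 : y'(t) ≥ M₀} satisfy |𝒯 − 𝒯'| ≤ C_S |y₀ − y₀'|. -/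

import Mathlib

open MeasureTheory Set

/-- Local Lipschitz continuity of the hitting time of the target set `[M₀, ∞)`
with respect to the initial position, uniformly in the controls. -/
theorem hitting_time_locally_lipschitz
    (M₀ c Lg Mg S : ℝ) (hc : 0 < c) (hLg : 0 ≤ Lg) (hMg : 0 < Mg) (hS : S < M₀) :
    ∃ CS : ℝ, 0 < CS ∧
      ∀ (U V : Type) [MeasurableSpace U] [MeasurableSpace V]
        (u : ℝ → U) (v : ℝ → V), Measurable u → Measurable v →
        ∀ g : ℝ → U → V → ℝ,
          (∀ y a b, 0 ≤ g y a b) →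
          (∀ y a b, g y a b ≤ Mg) →
          (∀ y y' a b, |g y a b - g y' a b| ≤ Lg * |y - y'|) →
          (∀ y a b, y ≤ M₀ → c ≤ g y a b) →
          ∀ y₀ y₀' : ℝ, S ≤ y₀ → y₀ ≤ y₀' → y₀' < M₀ →
            ∀ y y' : ℝ → ℝ, ContinuousOn y (Ici 0) → ContinuousOn y' (Ici 0) →
              Measurable (fun s => g (y s) (u s) (v s)) →
              Measurable (fun s => g (y' s) (u s) (v s)) →
              (∀ t : ℝ, 0 ≤ t → y t = y₀ + ∫ s in (0 : ℝ)..t, g (y s) (u s) (v s)) →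
              (∀ t : ℝ, 0 ≤ t → y' t = y₀' + ∫ s in (0 : ℝ)..t, g (y' s) (u s) (v s)) →
              |sInf {t : ℝ | 0 ≤ t ∧ M₀ ≤ y t} - sInf {t : ℝ | 0 ≤ t ∧ M₀ ≤ y' t}| ≤
                CS * |y₀ - y₀'| := by
  set T : ℝ := (M₀ - S) / c with hTdef
  have hT0 : 0 < T := div_pos (by linarith) hc
  refine ⟨Real.exp (Lg * T) / c, by positivity, ?_⟩
  intro U V _ _ u v hu hv g hg0 hgM hgLip hgc y₀ y₀' hSy₀ hy₀le hy₀'M y y' hycont hy'cont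
    hmeas hmeas' hy hy'
  set f : ℝ → ℝ := fun s => g (y s) (u s) (v s) with hfdef
  set f' : ℝ → ℝ := fun s => g (y' s) (u s) (v s) with hf'def
  -- interval integrability of bounded measurable functions
  have hii : ∀ φ : ℝ → ℝ, Measurable φ → (∀ s, 0 ≤ φ s) → (∀ s, φ s ≤ Mg) →
      ∀ a b : ℝ, IntervalIntegrable φ volume a b := by
    intro φ hm h0 hM a b
    rw [intervalIntegrable_iff]
    refine Integrable.mono' (g := fun _ => Mg) (integrableOn_const measure_Ioc_lt_top.ne)
      hm.aestronglyMeasurable (ae_of_all _ fun s => ?_)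
    rw [Real.norm_eq_abs, abs_of_nonneg (h0 s)]
    exact hM s
  have hif : ∀ a b : ℝ, IntervalIntegrable f volume a b :=
    hii f hmeas (fun s => hg0 _ _ _) (fun s => hgM _ _ _)
  have hif' : ∀ a b : ℝ, IntervalIntegrable f' volume a b :=
    hii f' hmeas' (fun s => hg0 _ _ _) (fun s => hgM _ _ _)
  -- generic facts about a solution z
  have key : ∀ (z : ℝ → ℝ) (z₀ : ℝ) (φ : ℝ → ℝ),
      (∀ a b : ℝ, IntervalIntegrable φ volume a b) → (∀ s, 0 ≤ φ s) →
      (∀ s, z s ≤ M₀ → c ≤ φ s) →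
      (∀ t : ℝ, 0 ≤ t → z t = z₀ + ∫ s in (0 : ℝ)..t, φ s) →
      (∀ a b, 0 ≤ a → a ≤ b → z a ≤ z b) ∧
      (∀ s₀ δ : ℝ, 0 ≤ s₀ → 0 ≤ δ → M₀ - δ ≤ z s₀ → M₀ ≤ z (s₀ + δ / c)) := by
    intro z z₀ φ hint h0 hcφ heq
    have hsub : ∀ a b : ℝ, 0 ≤ a → a ≤ b → z b - z a = ∫ s in a..b, φ s := by
      intro a b ha hab
      have hb : (0 : ℝ) ≤ b := ha.trans hab
      have hadd := intervalIntegral.integral_add_adjacent_intervals (hint 0 a) (hint a b)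
      rw [heq a ha, heq b hb]
      linarith [hadd]
    have mono : ∀ a b, 0 ≤ a → a ≤ b → z a ≤ z b := by
      intro a b ha hab
      have := hsub a b ha hab
      have hnn : 0 ≤ ∫ s in a..b, φ s :=
        intervalIntegral.integral_nonneg hab fun s _ => h0 s
      linarith
    refine ⟨mono, ?_⟩
    intro s₀ δ hs₀ hδ hz
    set t₁ : ℝ := s₀ + δ / c with ht₁def
    have hδc : 0 ≤ δ / c := div_nonneg hδ hc.le
    have ht₁ : s₀ ≤ t₁ := by rw [ht₁def]; linarith
    by_contra hlt
    push_neg at hlt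
    have hz' : ∀ s ∈ Icc s₀ t₁, c ≤ φ s := by
      intro s hs
      exact hcφ s ((mono s t₁ (hs₀.trans hs.1) hs.2).trans hlt.le)
    have hle : c * (t₁ - s₀) ≤ ∫ s in s₀..t₁, φ s := by
      have := intervalIntegral.integral_mono_on ht₁
        (intervalIntegrable_const (c := c)) (hint s₀ t₁) hz'
      rwa [intervalIntegral.integral_const, smul_eq_mul, mul_comm] at this
    have hsub' := hsub s₀ t₁ hs₀ ht₁
    have hcδ : c * (t₁ - s₀) = δ := by
      rw [ht₁def]; field_simp; ring
    linarith [hle, hsub', hcδ]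
  obtain ⟨monoY, reachY⟩ := key y y₀ f hif (fun s => hg0 _ _ _)
    (fun s hs => hgc _ _ _ hs) hy
  obtain ⟨monoY', reachY'⟩ := key y' y₀' f' hif' (fun s => hg0 _ _ _)
    (fun s hs => hgc _ _ _ hs) hy'
  have hy0 : y 0 = y₀ := by simpa using hy 0 le_rfl
  have hy'0 : y' 0 = y₀' := by simpa using hy' 0 le_rfl
  set A : Set ℝ := {t : ℝ | 0 ≤ t ∧ M₀ ≤ y t} with hAdef
  set A' : Set ℝ := {t : ℝ | 0 ≤ t ∧ M₀ ≤ y' t} with hA'def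
  have hbddA : BddBelow A := ⟨0, fun t ht => ht.1⟩
  have hbddA' : BddBelow A' := ⟨0, fun t ht => ht.1⟩
  have hmemA : (M₀ - y₀) / c ∈ A := by
    have := reachY 0 (M₀ - y₀) le_rfl (by linarith) (by rw [hy0]; linarith)
    rw [zero_add] at this
    exact ⟨div_nonneg (by linarith) hc.le, this⟩
  have hmemA' : (M₀ - y₀') / c ∈ A' := by
    have := reachY' 0 (M₀ - y₀') le_rfl (by linarith) (by rw [hy'0]; linarith)
    rw [zero_add] at this
    exact ⟨div_nonneg (by linarith) hc.le, this⟩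
  have hclosedA : IsClosed A := by
    have : A = Ici 0 ∩ y ⁻¹' Ici M₀ := by
      ext t; simp [hAdef, mem_Ici, and_comm]
    rw [this]
    exact hycont.preimage_isClosed_of_isClosed isClosed_Ici isClosed_Ici
  have hclosedA' : IsClosed A' := by
    have : A' = Ici 0 ∩ y' ⁻¹' Ici M₀ := by
      ext t; simp [hA'def, mem_Ici, and_comm]
    rw [this]
    exact hy'cont.preimage_isClosed_of_isClosed isClosed_Ici isClosed_Ici
  have hTmem : sInf A ∈ A := hclosedA.csInf_mem ⟨_, hmemA⟩ hbddA
  have hTmem' : sInf A' ∈ A' := hclosedA'.csInf_mem ⟨_, hmemA'⟩ hbddA'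
  have hTle : sInf A ≤ T := by
    refine le_trans (csInf_le hbddA hmemA) ((div_le_div_iff_of_pos_right hc).mpr (by linarith))
  have hTle' : sInf A' ≤ T := by
    refine le_trans (csInf_le hbddA' hmemA') ((div_le_div_iff_of_pos_right hc).mpr (by linarith))
  -- Gronwall estimate
  set δ₀ : ℝ := y₀' - y₀ with hδ₀def
  have hδ₀ : 0 ≤ δ₀ := by linarith
  set h : ℝ → ℝ := fun s => |y' (max s 0) - y (max s 0)| with hhdef
  have hmax : Continuous fun s : ℝ => max s 0 := continuous_id.max continuous_const
  have hYc : Continuous fun s : ℝ => y (max s 0) :=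
    hycont.comp_continuous hmax fun x => le_max_right x 0
  have hY'c : Continuous fun s : ℝ => y' (max s 0) :=
    hy'cont.comp_continuous hmax fun x => le_max_right x 0
  have hhc : Continuous h := (hY'c.sub hYc).abs
  have hh0 : ∀ s, 0 ≤ h s := fun s => abs_nonneg _
  have hheq : ∀ s : ℝ, 0 ≤ s → h s = |y' s - y s| := by
    intro s hs; simp [hhdef, max_eq_left hs]
  set φ : ℝ → ℝ := fun t => δ₀ + Lg * ∫ s in (0 : ℝ)..t, h s with hφdef
  have hφder : ∀ t : ℝ, HasDerivAt φ (Lg * h t) t := by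
    intro t
    have hder : HasDerivAt (fun r => ∫ s in (0 : ℝ)..r, h s) (h t) t :=
      intervalIntegral.integral_hasDerivAt_right (hhc.intervalIntegrable 0 t)
        (hhc.stronglyMeasurableAtFilter _ _) hhc.continuousAt
    exact (hder.const_mul Lg).const_add δ₀
  -- a priori integral inequality
  have hprio : ∀ t : ℝ, 0 ≤ t → h t ≤ φ t := by
    intro t ht
    have hsubint : ∀ r : ℝ, 0 ≤ r →
        y' r - y r = δ₀ + ∫ s in (0 : ℝ)..r, (f' s - f s) := by
      intro r hr
      rw [hy' r hr, hy r hr, intervalIntegral.integral_sub (hif' 0 r) (hif 0 r)]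
      ring
    have h1 : |∫ s in (0 : ℝ)..t, (f' s - f s)| ≤ ∫ s in (0 : ℝ)..t, |f' s - f s| :=
      intervalIntegral.abs_integral_le_integral_abs ht
    have h2 : (∫ s in (0 : ℝ)..t, |f' s - f s|) ≤ ∫ s in (0 : ℝ)..t, Lg * h s := by
      refine intervalIntegral.integral_mono_on ht ((hif' 0 t).sub (hif 0 t)).abs
        ((continuous_const.mul hhc).intervalIntegrable 0 t) ?_
      intro s hs
      have := hgLip (y' s) (y s) (u s) (v s)
      rw [hheq s hs.1]
      exact this
    have h3 : (∫ s in (0 : ℝ)..t, Lg * h s) = Lg * ∫ s in (0 : ℝ)..t, h s := by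
      exact intervalIntegral.integral_const_mul Lg h
    have h4 : h t = |y' t - y t| := hheq t ht
    rw [h4, hsubint t ht]
    calc |δ₀ + ∫ s in (0 : ℝ)..t, (f' s - f s)|
        ≤ |δ₀| + |∫ s in (0 : ℝ)..t, (f' s - f s)| := abs_add_le _ _
      _ ≤ δ₀ + ∫ s in (0 : ℝ)..t, |f' s - f s| := by
          rw [abs_of_nonneg hδ₀]; linarith
      _ ≤ δ₀ + Lg * ∫ s in (0 : ℝ)..t, h s := by rw [← h3]; linarith
  have hφnn : ∀ t : ℝ, 0 ≤ t → 0 ≤ φ t := fun t ht => (hh0 t).trans (hprio t ht)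
  have hgron : ∀ t ∈ Icc (0 : ℝ) T, ‖φ t‖ ≤ gronwallBound δ₀ Lg 0 (t - 0) := by
    refine norm_le_gronwallBound_of_norm_deriv_right_le
      (f := φ) (f' := fun t => Lg * h t) ?_ ?_ ?_ ?_
    · exact fun t _ => ((hφder t).continuousAt).continuousWithinAt
    · exact fun t _ => (hφder t).hasDerivWithinAt
    · have : φ 0 = δ₀ := by simp [hφdef]
      rw [this, Real.norm_eq_abs, abs_of_nonneg hδ₀]
    · intro t ht
      rw [Real.norm_eq_abs, Real.norm_eq_abs, abs_of_nonneg (by positivity : (0:ℝ) ≤ Lg * h t),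
        abs_of_nonneg (hφnn t ht.1)]
      have := hprio t ht.1
      nlinarith
  have hG : ∀ t : ℝ, 0 ≤ t → t ≤ T → |y' t - y t| ≤ δ₀ * Real.exp (Lg * T) := by
    intro t ht htT
    have h1 := hgron t ⟨ht, htT⟩
    rw [sub_zero, gronwallBound_ε0, Real.norm_eq_abs, abs_of_nonneg (hφnn t ht)] at h1
    have h2 : δ₀ * Real.exp (Lg * t) ≤ δ₀ * Real.exp (Lg * T) := by
      have : Real.exp (Lg * t) ≤ Real.exp (Lg * T) :=
        Real.exp_le_exp.mpr (mul_le_mul_of_nonneg_left htT hLg)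
      exact mul_le_mul_of_nonneg_left this hδ₀
    have h3 := hprio t ht
    rw [← hheq t ht]
    linarith
  set δ : ℝ := δ₀ * Real.exp (Lg * T) with hδdef
  have hδnn : 0 ≤ δ := by positivity
  -- sInf A' ≤ sInf A + δ/c
  have h1 : sInf A' ≤ sInf A + δ / c := by
    have h𝒯 := hTmem
    have hb : |y' (sInf A) - y (sInf A)| ≤ δ := hG _ h𝒯.1 hTle
    have hy'T : M₀ - δ ≤ y' (sInf A) := by
      have := abs_le.mp hb
      linarith [h𝒯.2, this.1]
    have := reachY' (sInf A) δ h𝒯.1 hδnn hy'T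
    exact csInf_le hbddA' ⟨add_nonneg h𝒯.1 (div_nonneg hδnn hc.le), this⟩
  have h2 : sInf A ≤ sInf A' + δ / c := by
    have h𝒯 := hTmem'
    have hb : |y' (sInf A') - y (sInf A')| ≤ δ := hG _ h𝒯.1 hTle'
    have hyT : M₀ - δ ≤ y (sInf A') := by
      have := abs_le.mp hb
      linarith [h𝒯.2, this.2]
    have := reachY (sInf A') δ h𝒯.1 hδnn hyT
    exact csInf_le hbddA ⟨add_nonneg h𝒯.1 (div_nonneg hδnn hc.le), this⟩
  have habs : |y₀ - y₀'| = δ₀ := by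
    rw [hδ₀def, abs_of_nonpos (by linarith)]; ring
  rw [habs]
  have hfinal : δ / c = Real.exp (Lg * T) / c * δ₀ := by
    rw [hδdef]; ring
  rw [abs_le]
  constructor <;> linarith [h1, h2, hfinal]
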